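/- Modulational instability of the domain wall: Let ξ, k ∈ ℝ with 0 < k < ξ, and set Ω = k√(ξ² − k²) > 0. Define m₁(t,x) = 0, m₂(t,x) = √(ξ² − k²) · e^{Ωt} cos(kx), m₃(t,x) = k · e^{Ωt} cos(kx). Then (m₁, m₂, m₃) is an exponentially growing solution of the linearization of the Heisenberg equation at the domain wall of winding number ξ, namely: ∂_t m₁ = 0, ∂_t m₂ = ∂_x² m₃ + ξ² m₃, and ∂_t m₃ = −∂_x² m₂ − 2ξ ∂_x m₁. -/
import Mathlib


noncomputable section

lemma aux_deriv_t (A Ω D t : ℝ) :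
    deriv (fun s => A * Real.exp (Ω * s) * D) t = A * (Ω * Real.exp (Ω * t)) * D := by
  have h : HasDerivAt (fun s => A * Real.exp (Ω * s) * D)
      (A * (Real.exp (Ω * t) * Ω) * D) t := by
    simpa using ((((hasDerivAt_id t).const_mul Ω).exp).const_mul A).mul_const D
  rw [h.deriv]; ring

lemma aux_deriv_cos (A k x : ℝ) :
    deriv (fun z => A * Real.cos (k * z)) x = -(A * k) * Real.sin (k * x) := by
  have h : HasDerivAt (fun z => A * Real.cos (k * z))
      (A * (-Real.sin (k * x) * k)) x := by
    simpa using (((hasDerivAt_id x).const_mul k).cos).const_mul A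
  rw [h.deriv]; ring

lemma aux_deriv_sin (A k x : ℝ) :
    deriv (fun z => A * Real.sin (k * z)) x = A * k * Real.cos (k * x) := by
  have h : HasDerivAt (fun z => A * Real.sin (k * z))
      (A * (Real.cos (k * x) * k)) x := by
    simpa using (((hasDerivAt_id x).const_mul k).sin).const_mul A
  rw [h.deriv]; ring

/-- **Modulational instability of the domain wall.**
For `0 < k < ξ` and `Ω = k√(ξ² − k²)`, the triple
`m₁ = 0`, `m₂ = √(ξ²−k²) e^{Ωt} cos kx`, `m₃ = k e^{Ωt} cos kx`
is an exponentially growing (`Ω > 0`) solution of the linearization of the Heisenberg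
equation at the domain wall of winding number `ξ`:
`∂_t m₁ = 0`, `∂_t m₂ = ∂_x² m₃ + ξ² m₃`, `∂_t m₃ = −∂_x² m₂ − 2ξ ∂_x m₁`. -/
theorem domain_wall_modulational_instability
    (ξ k : ℝ) (hk : 0 < k) (hkξ : k < ξ)
    (Ω : ℝ) (hΩ : Ω = k * Real.sqrt (ξ ^ 2 - k ^ 2))
    (m₁ m₂ m₃ : ℝ → ℝ → ℝ)
    (hm₁ : ∀ t x, m₁ t x = 0)
    (hm₂ : ∀ t x, m₂ t x = Real.sqrt (ξ ^ 2 - k ^ 2) * Real.exp (Ω * t) * Real.cos (k * x))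
    (hm₃ : ∀ t x, m₃ t x = k * Real.exp (Ω * t) * Real.cos (k * x)) :
    0 < Ω ∧
    (∀ t x : ℝ, deriv (fun s => m₁ s x) t = 0) ∧
    (∀ t x : ℝ, deriv (fun s => m₂ s x) t =
      deriv (fun y => deriv (fun z => m₃ t z) y) x + ξ ^ 2 * m₃ t x) ∧
    (∀ t x : ℝ, deriv (fun s => m₃ s x) t =
      -(deriv (fun y => deriv (fun z => m₂ t z) y) x) - 2 * ξ * deriv (fun y => m₁ t y) x) := by
  have hpos : 0 < ξ ^ 2 - k ^ 2 := by nlinarith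
  have hsq : Real.sqrt (ξ ^ 2 - k ^ 2) ^ 2 = ξ ^ 2 - k ^ 2 :=
    Real.sq_sqrt hpos.le
  have hsqrtpos : 0 < Real.sqrt (ξ ^ 2 - k ^ 2) := Real.sqrt_pos.mpr hpos
  refine ⟨by rw [hΩ]; positivity, ?_, ?_, ?_⟩
  · intro t x
    simp only [hm₁]
    exact deriv_const t 0
  · intro t x
    have inner : (fun y => deriv (fun z => m₃ t z) y)
        = fun y => -(k * Real.exp (Ω * t) * k) * Real.sin (k * y) := by
      funext y
      simp only [hm₃]
      exact aux_deriv_cos _ k y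
    have lhs : deriv (fun s => m₂ s x) t
        = Real.sqrt (ξ ^ 2 - k ^ 2) * (Ω * Real.exp (Ω * t)) * Real.cos (k * x) := by
      simp only [hm₂]
      exact aux_deriv_t _ Ω _ t
    rw [lhs, inner, aux_deriv_sin, hm₃, hΩ]
    linear_combination (k * Real.exp (k * Real.sqrt (ξ ^ 2 - k ^ 2) * t) * Real.cos (k * x)) * hsq
  · intro t x
    have inner : (fun y => deriv (fun z => m₂ t z) y)
        = fun y => -(Real.sqrt (ξ ^ 2 - k ^ 2) * Real.exp (Ω * t) * k) * Real.sin (k * y) := by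
      funext y
      simp only [hm₂]
      exact aux_deriv_cos _ k y
    have lhs : deriv (fun s => m₃ s x) t
        = k * (Ω * Real.exp (Ω * t)) * Real.cos (k * x) := by
      simp only [hm₃]
      exact aux_deriv_t _ Ω _ t
    have d1 : deriv (fun y => m₁ t y) x = 0 := by
      simp only [hm₁]
      exact deriv_const x 0
    rw [lhs, inner, aux_deriv_sin, d1, hΩ]
    ring
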